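/- Let A, B be positive semidefinite operators and Φ a trace non-increasing positive linear map between matrix algebras with Tr Φ(A) = Tr A. Then Tr(Φ(B)·Φ(A)⁰) ≥ Tr(B·A⁰) and Tr(Φ(B)(I − Φ(A)⁰)) ≤ Tr(B(I − A⁰)). -/

import Mathlib

open Matrix ComplexOrder

set_option linter.unusedSectionVars false

namespace RenyiAux
variable {n k : Type*} [Fintype n] [DecidableEq n] [Fintype k] [DecidableEq k]

lemma psd_of_proj {Q : Matrix n n ℂ} (h1 : Q.IsHermitian) (h2 : Q * Q = Q) :
    Q.PosSemidef := by
  have : Q = Qᴴ * Q := by rw [h1.eq, h2]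
  exact this ▸ posSemidef_conjTranspose_mul_self Q

lemma psd_diag_nonneg {M : Matrix n n ℂ} (hM : M.PosSemidef) (i : n) : 0 ≤ M i i := by
  simpa [dotProduct, mulVec, Pi.single_apply] using hM.dotProduct_mulVec_nonneg (Pi.single i 1)

lemma psd_trace_nonneg {M : Matrix n n ℂ} (hM : M.PosSemidef) : 0 ≤ M.trace :=
  Finset.sum_nonneg fun i _ => psd_diag_nonneg hM i

open scoped MatrixOrder in
noncomputable def _root_.Matrix.PosSemidef.sqrt {S : Matrix n n ℂ} (_hS : S.PosSemidef) :
    Matrix n n ℂ := CFC.sqrt S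

open scoped MatrixOrder in
lemma _root_.Matrix.PosSemidef.posSemidef_sqrt {S : Matrix n n ℂ} (hS : S.PosSemidef) :
    hS.sqrt.PosSemidef := nonneg_iff_posSemidef.mp (CFC.sqrt_nonneg S)

open scoped MatrixOrder in
lemma _root_.Matrix.PosSemidef.sqrt_mul_self {S : Matrix n n ℂ} (hS : S.PosSemidef) :
    hS.sqrt * hS.sqrt = S := CFC.sqrt_mul_sqrt_self S hS.nonneg

lemma psd_trace_mul_nonneg {S T : Matrix n n ℂ} (hS : S.PosSemidef) (hT : T.PosSemidef) :
    0 ≤ (S * T).trace := by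
  have h := (hT.mul_mul_conjTranspose_same hS.sqrt)
  rw [hS.posSemidef_sqrt.isHermitian.eq] at h
  have ht : (hS.sqrt * T * hS.sqrt).trace = (S * T).trace := by
    rw [trace_mul_cycle, hS.sqrt_mul_self]
  exact ht ▸ psd_trace_nonneg h

lemma eq_zero_of_trace_conjTranspose_mul_self {A : Matrix n k ℂ}
    (h : (Aᴴ * A).trace = 0) : A = 0 := by
  have hnn : ∀ j ∈ Finset.univ, 0 ≤ (Aᴴ * A) j j := fun j _ =>
    psd_diag_nonneg (posSemidef_conjTranspose_mul_self A) j
  have hz := (Finset.sum_eq_zero_iff_of_nonneg hnn).mp h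
  ext i j
  have : dotProduct (star fun i => A i j) (fun i => A i j) = 0 := by
    simpa [mul_apply, dotProduct] using hz j (Finset.mem_univ j)
  exact congrFun (dotProduct_star_self_eq_zero.mp this) i

lemma psd_mul_eq_zero {S T : Matrix n n ℂ} (hS : S.PosSemidef) (hT : T.PosSemidef)
    (h : (S * T).trace = 0) : S * T = 0 := by
  set s := hS.sqrt with hs
  set t := hT.sqrt with hst
  have hX : (s * t)ᴴ * (s * t) = t * (S * t) := by
    rw [conjTranspose_mul, hS.posSemidef_sqrt.isHermitian.eq,
      hT.posSemidef_sqrt.isHermitian.eq, mul_assoc, ← mul_assoc s s, hS.sqrt_mul_self,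
      ← mul_assoc]
  have htr : ((s * t)ᴴ * (s * t)).trace = 0 := by
    rw [hX, trace_mul_comm, mul_assoc, hT.sqrt_mul_self, h]
  have hzero : s * t = 0 := eq_zero_of_trace_conjTranspose_mul_self htr
  calc S * T = s * (s * t) * t := by
        rw [← hS.sqrt_mul_self, ← hT.sqrt_mul_self, ← hs, ← hst]; noncomm_ring
      _ = 0 := by rw [hzero, mul_zero, zero_mul]

lemma mul_eq_zero_of_range {M A P : Matrix n n ℂ} (h : M * A = 0)
    (hr : LinearMap.range P.mulVecLin = LinearMap.range A.mulVecLin) : M * P = 0 := by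
  ext i j
  have : (M * P) *ᵥ Pi.single j 1 = 0 := by
    rw [← mulVec_mulVec]
    obtain ⟨y, hy⟩ := hr ▸ LinearMap.mem_range_self P.mulVecLin (Pi.single j 1)
    simp only [mulVecLin_apply] at hy
    rw [← hy, mulVec_mulVec, h, zero_mulVec]
  simpa [mulVec_single] using congrFun this i

lemma proj_fix {Q N : Matrix k k ℂ} (hQQ : Q * Q = Q)
    (hr : LinearMap.range Q.mulVecLin = LinearMap.range N.mulVecLin) : Q * N = N := by
  ext i j
  have : (Q * N) *ᵥ Pi.single j 1 = N *ᵥ Pi.single j 1 := by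
    rw [← mulVec_mulVec]
    obtain ⟨y, hy⟩ := hr.symm ▸ LinearMap.mem_range_self N.mulVecLin (Pi.single j 1)
    simp only [mulVecLin_apply] at hy
    rw [← hy, mulVec_mulVec, hQQ]
  simpa [mulVec_single] using congrFun this i

lemma herm_diff_psd {H : Matrix n n ℂ} (hH : H.IsHermitian) :
    ∃ S T : Matrix n n ℂ, S.PosSemidef ∧ T.PosSemidef ∧ H = S - T := by
  set U : Matrix n n ℂ := (hH.eigenvectorUnitary : Matrix n n ℂ)
  set d := hH.eigenvalues
  refine ⟨U * diagonal (fun i => ((max (d i) 0 : ℝ) : ℂ)) * Uᴴ,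
          U * diagonal (fun i => ((max (-(d i)) 0 : ℝ) : ℂ)) * Uᴴ, ?_, ?_, ?_⟩
  · refine (Matrix.PosSemidef.diagonal ?_).mul_mul_conjTranspose_same U
    intro i
    simp only [Pi.zero_apply]
    exact_mod_cast le_max_right _ _
  · refine (Matrix.PosSemidef.diagonal ?_).mul_mul_conjTranspose_same U
    intro i
    simp only [Pi.zero_apply]
    exact_mod_cast le_max_right _ _
  · rw [← sub_mul, ← mul_sub]
    have hfun : (fun i => ((max (d i) 0 : ℝ) : ℂ) - ((max (-(d i)) 0 : ℝ) : ℂ))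
        = RCLike.ofReal ∘ d := by
      funext i
      rw [← Complex.ofReal_sub, max_zero_sub_max_neg_zero_eq_self]
      rfl
    rw [diagonal_sub, hfun]
    have := hH.spectral_theorem
    simp only [Unitary.conjStarAlgAut_apply, star_eq_conjTranspose] at this
    convert this using 2

variable (Φ : Matrix n n ℂ →ₗ[ℂ] Matrix k k ℂ)

lemma phi_herm (hΦ : ∀ X : Matrix n n ℂ, X.PosSemidef → (Φ X).PosSemidef)
    {H : Matrix n n ℂ} (hH : H.IsHermitian) : (Φ H).IsHermitian := by
  obtain ⟨S, T, hS, hT, rfl⟩ := herm_diff_psd hH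
  rw [map_sub]
  exact (hΦ S hS).isHermitian.sub (hΦ T hT).isHermitian

lemma phi_conj_aux (hΦ : ∀ X : Matrix n n ℂ, X.PosSemidef → (Φ X).PosSemidef)
    {H1 H2 : Matrix n n ℂ} (h1 : H1.IsHermitian) (h2 : H2.IsHermitian) :
    Φ (H1 + Complex.I • H2)ᴴ = (Φ (H1 + Complex.I • H2))ᴴ := by
  have hc : (H1 + Complex.I • H2)ᴴ = H1 - Complex.I • H2 := by
    rw [conjTranspose_add, conjTranspose_smul, h1.eq, h2.eq]
    simp [sub_eq_add_neg]
  rw [hc, map_sub, map_add, LinearMap.map_smul, conjTranspose_add,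
    conjTranspose_smul, (phi_herm Φ hΦ h1).eq, (phi_herm Φ hΦ h2).eq]
  simp [sub_eq_add_neg]

lemma phi_conj (hΦ : ∀ X : Matrix n n ℂ, X.PosSemidef → (Φ X).PosSemidef)
    (X : Matrix n n ℂ) : Φ Xᴴ = (Φ X)ᴴ := by
  have hH1 : ((1/2 : ℂ) • (X + Xᴴ)).IsHermitian := by
    rw [IsHermitian, conjTranspose_smul, conjTranspose_add, conjTranspose_conjTranspose,
      add_comm Xᴴ X]
    congr 1
    simp
  have hH2 : ((-(Complex.I)/2 : ℂ) • (X - Xᴴ)).IsHermitian := by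
    rw [IsHermitian, conjTranspose_smul, conjTranspose_sub, conjTranspose_conjTranspose,
      show Xᴴ - X = (-1 : ℂ) • (X - Xᴴ) by simp, smul_smul]
    congr 1
    simp [Complex.ext_iff]
    norm_num
  have hI : Complex.I • ((-(Complex.I)/2 : ℂ) • (X - Xᴴ)) = (1/2 : ℂ) • (X - Xᴴ) := by
    rw [smul_smul, show Complex.I * (-(Complex.I)/2) = (1/2 : ℂ) by
      linear_combination (-1/2 : ℂ) * Complex.I_mul_I]
  have hX : X = (1/2 : ℂ) • (X + Xᴴ) + Complex.I • ((-(Complex.I)/2 : ℂ) • (X - Xᴴ)) := by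
    rw [hI]; module
  rw [hX]
  exact phi_conj_aux Φ hΦ hH1 hH2

noncomputable def adj (Φ : Matrix n n ℂ →ₗ[ℂ] Matrix k k ℂ) (Y : Matrix k k ℂ) :
    Matrix n n ℂ :=
  Matrix.of fun i j => (Φ (Matrix.single j i 1) * Y).trace

lemma trace_adj (X : Matrix n n ℂ) (Y : Matrix k k ℂ) :
    (X * adj Φ Y).trace = (Φ X * Y).trace := by
  have hX : X = ∑ i : n, ∑ j : n, X i j • Matrix.single i j (1 : ℂ) := by
    conv_lhs => rw [matrix_eq_sum_single X]
    simp [smul_single]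
  conv_rhs => rw [hX]
  rw [map_sum]
  simp only [map_sum, LinearMap.map_smul, Finset.sum_mul, trace_sum, smul_mul_assoc,
    trace_smul]
  simp only [Matrix.trace, Matrix.diag, mul_apply, adj, of_apply, smul_eq_mul,
    Finset.mul_sum, Finset.sum_mul]

lemma outer_psd (x : k → ℂ) : (vecMulVec x (star x)).PosSemidef := by
  rw [vecMulVec_eq (Fin 1), ← conjTranspose_replicateCol]
  exact posSemidef_self_mul_conjTranspose _

lemma dot_trace (x : k → ℂ) (R : Matrix k k ℂ) :
    star x ⬝ᵥ (R *ᵥ x) = (vecMulVec x (star x) * R).trace := by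
  simp only [Matrix.trace, Matrix.diag, mul_apply, vecMulVec_apply, dotProduct, mulVec,
    Pi.star_apply, Finset.mul_sum, Finset.sum_mul]
  rw [Finset.sum_comm]
  exact Finset.sum_congr rfl fun i _ => Finset.sum_congr rfl fun j _ => by ring

lemma trace_outer (x : k → ℂ) : (vecMulVec x (star x)).trace = star x ⬝ᵥ x := by
  simp only [Matrix.trace, Matrix.diag, vecMulVec_apply, dotProduct, Pi.star_apply]
  exact Finset.sum_congr rfl fun i _ => by ring

lemma stdBasis_conjT (i : n) (j : n) :
    (Matrix.single i j (1 : ℂ))ᴴ = Matrix.single j i (1 : ℂ) := by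
  ext a b
  simp [Matrix.single, conjTranspose_apply, and_comm, apply_ite]

lemma adj_conjT (hc : ∀ X : Matrix n n ℂ, Φ Xᴴ = (Φ X)ᴴ) (Y : Matrix k k ℂ) :
    (adj Φ Y)ᴴ = adj Φ Yᴴ := by
  ext i j
  simp only [adj, conjTranspose_apply, of_apply]
  rw [← trace_conjTranspose, conjTranspose_mul, ← hc, stdBasis_conjT, trace_mul_comm]

lemma adj_psd (hΦ : ∀ X : Matrix n n ℂ, X.PosSemidef → (Φ X).PosSemidef)
    (hc : ∀ X : Matrix n n ℂ, Φ Xᴴ = (Φ X)ᴴ) {Y : Matrix k k ℂ} (hY : Y.PosSemidef) :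
    (adj Φ Y).PosSemidef := by
  refine PosSemidef.of_dotProduct_mulVec_nonneg ?_ ?_
  · show _ = _
    rw [adj_conjT Φ hc, hY.isHermitian.eq]
  · intro x
    rw [dot_trace, trace_adj]
    exact psd_trace_mul_nonneg (hΦ _ (outer_psd x)) hY

lemma adj_sub (Y1 Y2 : Matrix k k ℂ) : adj Φ (Y1 - Y2) = adj Φ Y1 - adj Φ Y2 := by
  ext i j
  simp [adj, mul_sub, trace_sub]

lemma one_sub_adj_one_psd (hΦtr : ∀ X : Matrix n n ℂ, X.PosSemidef → (Φ X).trace ≤ X.trace)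
    (hc : ∀ X : Matrix n n ℂ, Φ Xᴴ = (Φ X)ᴴ) :
    ((1 : Matrix n n ℂ) - adj Φ 1).PosSemidef := by
  refine PosSemidef.of_dotProduct_mulVec_nonneg ?_ ?_
  · show _ = _
    rw [conjTranspose_sub, conjTranspose_one, adj_conjT Φ hc, conjTranspose_one]
  · intro x
    rw [sub_mulVec, dotProduct_sub, one_mulVec, dot_trace x (adj Φ 1), trace_adj, mul_one]
    rw [sub_nonneg, ← trace_outer]
    exact hΦtr _ (outer_psd x)

end RenyiAux

open RenyiAux

/-- `P` is the support projection of the matrix `M`: the orthogonal projection onto the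
range of `M`. -/
def IsSupportProjection {k : ℕ} (M P : Matrix (Fin k) (Fin k) ℂ) : Prop :=
  P.IsHermitian ∧ P * P = P ∧ LinearMap.range P.mulVecLin = LinearMap.range M.mulVecLin

/-- If `A, B ≥ 0` and `Φ` is a trace non-increasing positive linear map with
`Tr Φ(A) = Tr A`, then `Tr (Φ(B) Φ(A)⁰) ≥ Tr (B A⁰)` and
`Tr (Φ(B) (I − Φ(A)⁰)) ≤ Tr (B (I − A⁰))`, where `A⁰` and `Φ(A)⁰` denote the support
projections of `A` and `Φ(A)`. -/
theorem renyi_zero_monotonicity {m k : ℕ}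
    (Φ : Matrix (Fin m) (Fin m) ℂ →ₗ[ℂ] Matrix (Fin k) (Fin k) ℂ)
    (hΦ : ∀ X : Matrix (Fin m) (Fin m) ℂ, X.PosSemidef → (Φ X).PosSemidef)
    (hΦtr : ∀ X : Matrix (Fin m) (Fin m) ℂ, X.PosSemidef → (Φ X).trace ≤ X.trace)
    (A B : Matrix (Fin m) (Fin m) ℂ) (hA : A.PosSemidef) (hB : B.PosSemidef)
    (htrA : (Φ A).trace = A.trace)
    (P : Matrix (Fin m) (Fin m) ℂ) (hP : IsSupportProjection A P)
    (Q : Matrix (Fin k) (Fin k) ℂ) (hQ : IsSupportProjection (Φ A) Q) :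
    (B * P).trace ≤ (Φ B * Q).trace ∧
      (Φ B * (1 - Q)).trace ≤ (B * (1 - P)).trace := by
  obtain ⟨hPh, hPP, hPr⟩ := hP
  obtain ⟨hQh, hQQ, hQr⟩ := hQ
  have hc : ∀ X : Matrix (Fin m) (Fin m) ℂ, Φ Xᴴ = (Φ X)ᴴ := phi_conj Φ hΦ
  have hQpsd : Q.PosSemidef := psd_of_proj hQh hQQ
  have h1Q : ((1 : Matrix (Fin k) (Fin k) ℂ) - Q).PosSemidef := by
    refine psd_of_proj ?_ ?_
    · show _ = _
      rw [conjTranspose_sub, conjTranspose_one, hQh.eq]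
    · simp only [sub_mul, mul_sub, one_mul, mul_one, hQQ]
      abel
  set R := RenyiAux.adj Φ Q with hR
  have hRpsd : R.PosSemidef := adj_psd Φ hΦ hc hQpsd
  -- M := 1 - R is PSD
  have hMpsd : ((1 : Matrix (Fin m) (Fin m) ℂ) - R).PosSemidef := by
    have e : (1 : Matrix (Fin m) (Fin m) ℂ) - R
        = ((1 : Matrix (Fin m) (Fin m) ℂ) - RenyiAux.adj Φ 1) + RenyiAux.adj Φ (1 - Q) := by
      rw [adj_sub]
      abel
    rw [e]
    exact (one_sub_adj_one_psd Φ hΦtr hc).add (adj_psd Φ hΦ hc h1Q)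
  -- trace A (1 - R) = 0
  have hQΦA : Q * Φ A = Φ A := proj_fix hQQ hQr
  have htr0 : (A * ((1 : Matrix (Fin m) (Fin m) ℂ) - R)).trace = 0 := by
    rw [mul_sub, trace_sub, mul_one, hR, trace_adj, trace_mul_comm, hQΦA, htrA, sub_self]
  have hMA : ((1 : Matrix (Fin m) (Fin m) ℂ) - R) * A = 0 := by
    refine psd_mul_eq_zero hMpsd hA ?_
    rw [trace_mul_comm]
    exact htr0
  have hMP : ((1 : Matrix (Fin m) (Fin m) ℂ) - R) * P = 0 := mul_eq_zero_of_range hMA hPr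
  have hRP : R * P = P := by
    have h' : P - R * P = 0 := by
      have h'' := hMP
      rwa [sub_mul, one_mul] at h''
    exact (sub_eq_zero.mp h').symm
  have hPR : P * R = P := by
    have h' := congrArg conjTranspose hRP
    rwa [conjTranspose_mul, hRpsd.isHermitian.eq, hPh.eq] at h'
  have hRsubP : (R - P).PosSemidef := by
    have e1 : (1 - P) * R * (1 - P)ᴴ = R - P := by
      rw [conjTranspose_sub, conjTranspose_one, hPh.eq]
      rw [sub_mul, one_mul, hPR]
      simp only [sub_mul, mul_sub, mul_one, hRP, hPP]
      abel
    exact e1 ▸ hRpsd.mul_mul_conjTranspose_same (1 - P)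
  have key1 : (B * P).trace ≤ (Φ B * Q).trace := by
    have h0 : 0 ≤ (B * (R - P)).trace := psd_trace_mul_nonneg hB hRsubP
    rw [mul_sub, trace_sub, sub_nonneg] at h0
    calc (B * P).trace ≤ (B * R).trace := h0
      _ = (Φ B * Q).trace := trace_adj Φ B Q
  refine ⟨key1, ?_⟩
  have hBtr := hΦtr B hB
  rw [mul_sub, mul_sub, mul_one, mul_one, trace_sub, trace_sub]
  exact sub_le_sub hBtr key1
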